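/- Let $a > 0$, $y_0 > 0$, and define $z_0(\hat x) = 1 + \frac{(y_0 - \hat x)\,e^{\hat x/a}}{a(e^{\hat x/a} - 1)}$ for $\hat x > 0$. Then $z_0$ is strictly decreasing on $(0,\infty)$, and $\lim_{\hat x \downarrow 0} z_0(\hat x) = +\infty$, $\lim_{\hat x \to \infty} z_0(\hat x) = -\infty$. -/

import Mathlib

open Real Filter Set Topology

theorem z0_strictAnti_and_limits (a y0 : ℝ) (ha : 0 < a) (hy0 : 0 < y0) :
    StrictAntiOn (fun xhat : ℝ =>
        1 + (y0 - xhat) * Real.exp (xhat / a) / (a * (Real.exp (xhat / a) - 1)))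
      (Set.Ioi 0) ∧
    Filter.Tendsto (fun xhat : ℝ =>
        1 + (y0 - xhat) * Real.exp (xhat / a) / (a * (Real.exp (xhat / a) - 1)))
      (nhdsWithin 0 (Set.Ioi 0)) Filter.atTop ∧
    Filter.Tendsto (fun xhat : ℝ =>
        1 + (y0 - xhat) * Real.exp (xhat / a) / (a * (Real.exp (xhat / a) - 1)))
      Filter.atTop Filter.atBot := by
  set f : ℝ → ℝ := fun xhat =>
    1 + (y0 - xhat) * Real.exp (xhat / a) / (a * (Real.exp (xhat / a) - 1)) with hf
  have hMpos : ∀ x : ℝ, 0 < x → 0 < a * (Real.exp (x / a) - 1) := by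
    intro x hx
    have h1 : 1 < Real.exp (x / a) := by
      rw [Real.one_lt_exp_iff]; positivity
    have h2 : 0 < Real.exp (x / a) - 1 := by linarith
    positivity
  -- derivative
  have hderiv : ∀ x : ℝ, 0 < x → HasDerivAt f
      ((((-1) * Real.exp (x / a) + (y0 - x) * (Real.exp (x / a) * (1 / a))) *
          (a * (Real.exp (x / a) - 1)) -
        (y0 - x) * Real.exp (x / a) * (a * (Real.exp (x / a) * (1 / a)))) /
        (a * (Real.exp (x / a) - 1)) ^ 2) x := by
    intro x hx
    have hd : HasDerivAt (fun x : ℝ => x / a) (1 / a) x := (hasDerivAt_id x).div_const a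
    have hE : HasDerivAt (fun x : ℝ => Real.exp (x / a)) (Real.exp (x / a) * (1 / a)) x :=
      hd.exp
    have hN : HasDerivAt (fun x : ℝ => (y0 - x) * Real.exp (x / a))
        ((-1) * Real.exp (x / a) + (y0 - x) * (Real.exp (x / a) * (1 / a))) x := by
      have h1 : HasDerivAt (fun x : ℝ => y0 - x) (-1) x := by
        simpa using (hasDerivAt_id' x).const_sub y0
      exact h1.mul hE
    have hM : HasDerivAt (fun x : ℝ => a * (Real.exp (x / a) - 1))
        (a * (Real.exp (x / a) * (1 / a))) x := (hE.sub_const 1).const_mul a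
    exact (hN.div hM (hMpos x hx).ne').const_add 1
  have hderivneg : ∀ x : ℝ, 0 < x → deriv f x < 0 := by
    intro x hx
    rw [(hderiv x hx).deriv]
    apply div_neg_of_neg_of_pos
    · have hE0 : 0 < Real.exp (x / a) := Real.exp_pos _
      have hge : x + a ≤ a * Real.exp (x / a) := by
        have := Real.add_one_le_exp (x / a)
        calc x + a = a * (x / a + 1) := by field_simp
        _ ≤ a * Real.exp (x / a) := by nlinarith
      have key : (((-1) * Real.exp (x / a) + (y0 - x) * (Real.exp (x / a) * (1 / a))) *
          (a * (Real.exp (x / a) - 1)) -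
        (y0 - x) * Real.exp (x / a) * (a * (Real.exp (x / a) * (1 / a))))
          = Real.exp (x / a) * (x + a - y0 - a * Real.exp (x / a)) := by
        field_simp
        ring
      rw [key]
      have : x + a - y0 - a * Real.exp (x / a) < 0 := by nlinarith
      exact mul_neg_of_pos_of_neg hE0 this
    · exact pow_pos (hMpos x hx) 2
  have hanti : StrictAntiOn f (Set.Ioi 0) := by
    apply strictAntiOn_of_deriv_neg (convex_Ioi 0)
    · intro x hx
      exact (hderiv x hx).differentiableAt.continuousAt.continuousWithinAt
    · intro x hx
      rw [interior_Ioi] at hx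
      exact hderivneg x hx
  refine ⟨hanti, ?_, ?_⟩
  · -- limit at 0+
    have hN : Tendsto (fun x : ℝ => (y0 - x) * Real.exp (x / a)) (𝓝[>] 0) (𝓝 y0) := by
      have : ContinuousAt (fun x : ℝ => (y0 - x) * Real.exp (x / a)) 0 := by fun_prop
      have h := (this.continuousWithinAt (s := Set.Ioi 0)).tendsto
      simpa using h
    have hM : Tendsto (fun x : ℝ => a * (Real.exp (x / a) - 1)) (𝓝[>] 0) (𝓝[>] 0) := by
      apply tendsto_nhdsWithin_of_tendsto_nhds_of_eventually_within
      · have : ContinuousAt (fun x : ℝ => a * (Real.exp (x / a) - 1)) 0 := by fun_prop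
        have h := (this.continuousWithinAt (s := Set.Ioi 0)).tendsto
        simpa using h
      · filter_upwards [self_mem_nhdsWithin] with x hx
        exact hMpos x hx
    have hdiv : Tendsto (fun x : ℝ =>
        (y0 - x) * Real.exp (x / a) / (a * (Real.exp (x / a) - 1))) (𝓝[>] 0) atTop := by
      simp only [div_eq_mul_inv]
      exact hN.pos_mul_atTop hy0 (tendsto_inv_nhdsGT_zero.comp hM)
    simpa [hf] using tendsto_atTop_add_const_left _ 1 hdiv
  · -- limit at ∞
    have hg : Tendsto (fun x : ℝ => Real.exp (x / a) / (a * (Real.exp (x / a) - 1)))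
        atTop (𝓝 (1 / a)) := by
      have h1 : Tendsto (fun x : ℝ => Real.exp (-(x / a))) atTop (𝓝 0) := by
        apply Real.tendsto_exp_atBot.comp
        apply tendsto_neg_atBot_iff.mpr
        exact tendsto_id.atTop_div_const ha
      have h2 : Tendsto (fun x : ℝ => 1 / (a * (1 - Real.exp (-(x / a))))) atTop
          (𝓝 (1 / a)) := by
        have hden : Tendsto (fun x : ℝ => a * (1 - Real.exp (-(x / a)))) atTop
            (𝓝 (a * (1 - 0))) := tendsto_const_nhds.mul (tendsto_const_nhds.sub h1)
        have h3 := (tendsto_const_nhds (x := (1:ℝ)) (f := (atTop : Filter ℝ))).div hden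
          (by simp [ha.ne'])
        rw [show (1:ℝ) / (a * (1 - 0)) = 1 / a by norm_num] at h3
        exact h3
      apply h2.congr'
      filter_upwards [eventually_gt_atTop 0] with x hx
      have hE0 : (0:ℝ) < Real.exp (x / a) := Real.exp_pos _
      have hE1 : 1 < Real.exp (x / a) := by
        rw [Real.one_lt_exp_iff]; positivity
      rw [Real.exp_neg]
      field_simp
    have hatbot : Tendsto (fun x : ℝ => y0 - x) atTop atBot := by
      simpa [sub_eq_add_neg] using tendsto_atBot_add_const_left atTop y0 tendsto_neg_atTop_atBot
    have hdiv : Tendsto (fun x : ℝ =>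
        (y0 - x) * Real.exp (x / a) / (a * (Real.exp (x / a) - 1))) atTop atBot := by
      have := hatbot.atBot_mul_pos (by positivity : (0:ℝ) < 1 / a) hg
      apply this.congr
      intro x
      ring
    simpa [hf] using tendsto_atBot_add_const_left _ 1 hdiv
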